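/- The restriction s⊥ of the tensor s = π_M*g_M − π_N*g_N to the normal bundle of Γ(f), evaluated in the adapted normal frame, satisfies s⊥(ξᵢ,ξⱼ) = −δᵢⱼ for 1 ≤ i ≤ n−r and s⊥(ξᵢ,ξⱼ) = −((1−λ_{i+m−n}²)/(1+λ_{i+m−n}²)) δᵢⱼ for n−r+1 ≤ i ≤ n. Consequently, if g_M − f*g_N ≥ ε g on the tangent space (ε > 0), then s⊥ ≤ −ε g⊥ on the normal space. -/

import Mathlib

open RealInnerProductSpace

noncomputable def pp {E F : Type*} [NormedAddCommGroup E] [InnerProductSpace ℝ E]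
    [NormedAddCommGroup F] [InnerProductSpace ℝ F] (x : E) (y : F) :
    WithLp 2 (E × F) :=
  (WithLp.equiv 2 (E × F)).symm (x, y)

/-- The tensor `s = π_M^* g_M - π_N^* g_N`. -/
noncomputable def sform {E F : Type*} [NormedAddCommGroup E] [InnerProductSpace ℝ E]
    [NormedAddCommGroup F] [InnerProductSpace ℝ F] (v w : WithLp 2 (E × F)) : ℝ :=
  ⟪((WithLp.equiv 2 (E × F)) v).1, ((WithLp.equiv 2 (E × F)) w).1⟫ -
    ⟪((WithLp.equiv 2 (E × F)) v).2, ((WithLp.equiv 2 (E × F)) w).2⟫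

section Aux

variable {E F : Type*} [NormedAddCommGroup E] [InnerProductSpace ℝ E]
    [NormedAddCommGroup F] [InnerProductSpace ℝ F]

theorem sform_pp (x x' : E) (y y' : F) :
    sform (pp x y) (pp x' y') = ⟪x, x'⟫ - ⟪y, y'⟫ := rfl

theorem inner_pp (x x' : E) (y y' : F) :
    ⟪pp x y, pp x' y'⟫ = ⟪x, x'⟫ + ⟪y, y'⟫ := rfl

theorem sform_smul_left (c : ℝ) (v w : WithLp 2 (E × F)) :
    sform (c • v) w = c * sform v w := by
  simp [sform, real_inner_smul_left, mul_sub]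

theorem sform_smul_right (c : ℝ) (v w : WithLp 2 (E × F)) :
    sform v (c • w) = c * sform v w := by
  simp [sform, real_inner_smul_right, mul_sub]

theorem sform_add_left (u v w : WithLp 2 (E × F)) :
    sform (u + v) w = sform u w + sform v w := by
  simp [sform, inner_add_left]; ring

theorem sform_add_right (u v w : WithLp 2 (E × F)) :
    sform u (v + w) = sform u v + sform u w := by
  simp [sform, inner_add_right]; ring

theorem sform_sum_left {ι : Type*} (s : Finset ι) (v : ι → WithLp 2 (E × F))
    (w : WithLp 2 (E × F)) : sform (∑ i ∈ s, v i) w = ∑ i ∈ s, sform (v i) w := by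
  classical
  induction s using Finset.induction with
  | empty => simp [sform]
  | insert _ _ h ih => simp [Finset.sum_insert h, sform_add_left, ih]

theorem sform_sum_right {ι : Type*} (s : Finset ι) (v : WithLp 2 (E × F))
    (w : ι → WithLp 2 (E × F)) : sform v (∑ i ∈ s, w i) = ∑ i ∈ s, sform v (w i) := by
  classical
  induction s using Finset.induction with
  | empty => simp [sform]
  | insert _ _ h ih => simp [Finset.sum_insert h, sform_add_right, ih]

end Aux

/-- On the adapted normal frame, `s⊥(ξᵢ,ξⱼ) = -δᵢⱼ` for `i ≤ n-r` and
`s⊥(ξᵢ,ξⱼ) = -((1-λ_{i+m-n}²)/(1+λ_{i+m-n}²)) δᵢⱼ` for `i > n-r`.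
Consequently, if `(1-λᵢ²)/(1+λᵢ²) ≥ ε > 0` for all `i` (i.e. `g_M - f^*g_N ≥ ε g`),
then `s⊥ ≤ -ε g⊥` on the normal space. -/
theorem stmt_6 {E F : Type*} [NormedAddCommGroup E] [InnerProductSpace ℝ E]
    [NormedAddCommGroup F] [InnerProductSpace ℝ F] (m n r : ℕ)
    (hm : 0 < m) (hrm : r ≤ m) (hrn : r ≤ n)
    (α : Fin m → E) (β : Fin n → F)
    (hα : Orthonormal ℝ α) (hβ : Orthonormal ℝ β)
    (l : Fin m → ℝ) (hl0 : ∀ i, 0 ≤ l i)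
    (hlz : ∀ i : Fin m, (i : ℕ) < m - r → l i = 0)
    (ξ : Fin n → WithLp 2 (E × F))
    (hξ : ∀ j : Fin n, ∀ h : n ≤ (j : ℕ) + m,
      ξ j = (Real.sqrt (1 + (l ⟨(j : ℕ) + m - n, by have := j.isLt; omega⟩) ^ 2))⁻¹ •
        pp (-((l ⟨(j : ℕ) + m - n, by have := j.isLt; omega⟩) •
              α ⟨(j : ℕ) + m - n, by have := j.isLt; omega⟩)) (β j))
    (hξ' : ∀ j : Fin n, (j : ℕ) + m < n → ξ j = pp 0 (β j)) :
    (∀ i j : Fin n, sform (ξ i) (ξ j) =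
      if i = j then
        (if h : (i : ℕ) < n - r then (-1 : ℝ)
         else -((1 - (l ⟨(i : ℕ) + m - n, by have := i.isLt; omega⟩) ^ 2) /
                 (1 + (l ⟨(i : ℕ) + m - n, by have := i.isLt; omega⟩) ^ 2)))
      else 0) ∧
    (∀ ε : ℝ, 0 < ε → (∀ i : Fin m, ε ≤ (1 - l i ^ 2) / (1 + l i ^ 2)) →
      ∀ v ∈ Submodule.span ℝ (Set.range ξ), sform v v ≤ -ε * ‖v‖ ^ 2) := by
  classical
  -- normalized representation of each ξ j
  have key : ∀ j : Fin n, ∃ (t : ℝ) (k : Fin m), 0 ≤ t ∧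
      ξ j = (Real.sqrt (1 + t ^ 2))⁻¹ • pp (-(t • α k)) (β j) ∧
      (t ≠ 0 → n ≤ (j : ℕ) + m ∧ (k : ℕ) = (j : ℕ) + m - n) ∧
      (∀ h : n ≤ (j : ℕ) + m, t = l ⟨(j : ℕ) + m - n, by have := j.isLt; omega⟩) := by
    intro j
    by_cases h : n ≤ (j : ℕ) + m
    · refine ⟨l ⟨(j : ℕ) + m - n, by have := j.isLt; omega⟩,
        ⟨(j : ℕ) + m - n, by have := j.isLt; omega⟩, hl0 _, hξ j h, fun _ => ⟨h, rfl⟩,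
        fun _ => rfl⟩
    · refine ⟨0, ⟨0, hm⟩, le_refl _, ?_, fun h0 => absurd rfl h0, fun h' => absurd h' h⟩
      rw [hξ' j (by omega)]
      norm_num
  choose t k ht0 hrep htnz htval using key
  have hsq : ∀ j : Fin n, (0 : ℝ) < 1 + t j ^ 2 := fun j => by positivity
  -- general formula
  have hform : ∀ i j : Fin n, sform (ξ i) (ξ j) =
      (Real.sqrt (1 + t i ^ 2))⁻¹ * ((Real.sqrt (1 + t j ^ 2))⁻¹ *
        (t i * t j * ⟪α (k i), α (k j)⟫ - ⟪β i, β j⟫)) := by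
    intro i j
    rw [hrep i, hrep j, sform_smul_left, sform_smul_right, sform_pp,
      inner_neg_neg, real_inner_smul_left, real_inner_smul_right]
    ring
  have hinner : ∀ i j : Fin n, ⟪ξ i, ξ j⟫ =
      (Real.sqrt (1 + t i ^ 2))⁻¹ * ((Real.sqrt (1 + t j ^ 2))⁻¹ *
        (t i * t j * ⟪α (k i), α (k j)⟫ + ⟪β i, β j⟫)) := by
    intro i j
    rw [hrep i, hrep j, real_inner_smul_left, real_inner_smul_right, inner_pp,
      inner_neg_neg, real_inner_smul_left, real_inner_smul_right]
    ring
  -- cross terms vanish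
  have hcross : ∀ i j : Fin n, i ≠ j → t i * t j * ⟪α (k i), α (k j)⟫ = 0 := by
    intro i j hij
    by_cases hi : t i = 0
    · simp [hi]
    by_cases hj : t j = 0
    · simp [hj]
    have h1 := htnz i hi
    have h2 := htnz j hj
    have hk : k i ≠ k j := by
      intro h
      apply hij
      have := congrArg (Fin.val) h
      rw [h1.2, h2.2] at this
      exact Fin.ext (by omega)
    rw [hα.2 hk, mul_zero]
  have hsqrtmul : ∀ i : Fin n,
      (Real.sqrt (1 + t i ^ 2))⁻¹ * (Real.sqrt (1 + t i ^ 2))⁻¹ = (1 + t i ^ 2)⁻¹ := by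
    intro i
    rw [← mul_inv, Real.mul_self_sqrt (hsq i).le]
  -- diagonal values
  have hαself : ∀ i : Fin m, ⟪α i, α i⟫ = 1 := fun i => by
    rw [real_inner_self_eq_norm_sq, hα.1 i]; norm_num
  have hβself : ∀ i : Fin n, ⟪β i, β i⟫ = 1 := fun i => by
    rw [real_inner_self_eq_norm_sq, hβ.1 i]; norm_num
  have hdiag : ∀ i : Fin n, sform (ξ i) (ξ i) = -((1 - t i ^ 2) / (1 + t i ^ 2)) := by
    intro i
    rw [hform i i, ← mul_assoc, hsqrtmul i, hαself, hβself]
    field_simp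
    ring
  -- Part 1
  have part1 : ∀ i j : Fin n, sform (ξ i) (ξ j) =
      if i = j then
        (if h : (i : ℕ) < n - r then (-1 : ℝ)
         else -((1 - (l ⟨(i : ℕ) + m - n, by have := i.isLt; omega⟩) ^ 2) /
                 (1 + (l ⟨(i : ℕ) + m - n, by have := i.isLt; omega⟩) ^ 2)))
      else 0 := by
    intro i j
    by_cases hij : i = j
    · subst hij
      rw [if_pos rfl, hdiag i]
      by_cases h : (i : ℕ) < n - r
      · rw [dif_pos h]
        have hti : t i = 0 := by
          by_contra hti
          obtain ⟨h1, h2⟩ := htnz i hti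
          have := htval i h1
          apply hti
          rw [this]
          exact hlz _ (by simp; omega)
        rw [hti]
        norm_num
      · rw [dif_neg h]
        have h1 : n ≤ (i : ℕ) + m := by omega
        rw [htval i h1]
    · rw [if_neg hij, hform i j, hcross i j hij, hβ.2 hij]
      ring
  refine ⟨part1, ?_⟩
  -- orthonormality of ξ
  have hξon : Orthonormal ℝ ξ := by
    rw [orthonormal_iff_ite]
    intro i j
    by_cases hij : i = j
    · subst hij
      rw [if_pos rfl, hinner i i, ← mul_assoc, hsqrtmul i, hαself, hβself]
      field_simp
      ring
    · rw [if_neg hij, hinner i j, hcross i j hij, hβ.2 hij]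
      ring
  -- Part 2
  intro ε hε hεl v hv
  rw [Submodule.mem_span_range_iff_exists_fun] at hv
  obtain ⟨c, rfl⟩ := hv
  have hnorm : ‖∑ i, c i • ξ i‖ ^ 2 = ∑ i, c i ^ 2 := by
    rw [← real_inner_self_eq_norm_sq, hξon.inner_sum]
    simp [sq]
  have hsf : sform (∑ i, c i • ξ i) (∑ i, c i • ξ i) =
      ∑ i, c i ^ 2 * sform (ξ i) (ξ i) := by
    rw [sform_sum_left]
    congr 1
    funext i
    rw [sform_smul_left, sform_sum_right]
    rw [Finset.mul_sum]
    rw [Finset.sum_eq_single i]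
    · rw [sform_smul_right]; ring
    · intro j _ hji
      rw [sform_smul_right, part1 i j, if_neg (Ne.symm hji)]
      ring
    · intro h; exact absurd (Finset.mem_univ i) h
  rw [hsf, hnorm]
  have hε1 : ε ≤ 1 := by
    have := hεl ⟨0, hm⟩
    calc ε ≤ (1 - l ⟨0, hm⟩ ^ 2) / (1 + l ⟨0, hm⟩ ^ 2) := this
    _ ≤ 1 := by
      rw [div_le_one (by positivity)]
      nlinarith [sq_nonneg (l ⟨0, hm⟩)]
  have hdle : ∀ i : Fin n, sform (ξ i) (ξ i) ≤ -ε := by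
    intro i
    rw [part1 i i, if_pos rfl]
    by_cases h : (i : ℕ) < n - r
    · rw [dif_pos h]; linarith
    · rw [dif_neg h]
      have := hεl ⟨(i : ℕ) + m - n, by have := i.isLt; omega⟩
      linarith
  calc ∑ i, c i ^ 2 * sform (ξ i) (ξ i) ≤ ∑ i, c i ^ 2 * (-ε) := by
        apply Finset.sum_le_sum
        intro i _
        exact mul_le_mul_of_nonneg_left (hdle i) (sq_nonneg _)
    _ = -ε * ∑ i, c i ^ 2 := by rw [← Finset.sum_mul]; ring
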